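/- Let E be a complex Banach space, let u ∈ E, and let (x_n)_{n∈ℕ} be a countable family of vectors of E such that x_n does not belong to the line ℂ·u for every n ∈ ℕ. Then there exists a continuous linear functional f : E → ℂ such that f(u) = 0 and f(x_n) ≠ 0 for every n ∈ ℕ. -/

import Mathlib

open Filter Set

/-- Hahn–Banach step: for each `n` there is a continuous functional vanishing at `u`
but not at `x n`. -/
lemma aux_exists_functional {E : Type*} [NormedAddCommGroup E] [NormedSpace ℂ E]
    {u v : E} (hv : v ∉ Submodule.span ℂ ({u} : Set E)) :
    ∃ f : E →L[ℂ] ℂ, f u = 0 ∧ f v ≠ 0 := by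
  set S : Submodule ℂ E := Submodule.span ℂ ({u} : Set E)
  have hS : IsClosed (S : Set E) := S.closed_of_finiteDimensional
  haveI : IsClosed (S : Set E) := hS
  have hne : (Submodule.Quotient.mk v : E ⧸ S) ≠ 0 := by
    simpa [Submodule.Quotient.mk_eq_zero] using hv
  obtain ⟨g, hg⟩ := SeparatingDual.exists_ne_zero (R := ℂ) hne
  have hcont : Continuous (S.mkQ : E → E ⧸ S) := by
    refine AddMonoidHomClass.continuous_of_bound S.mkQ 1 fun m => ?_
    simpa using Submodule.Quotient.norm_mk_le S m
  refine ⟨g.comp ⟨S.mkQ, hcont⟩, ?_, ?_⟩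
  · have : (Submodule.Quotient.mk u : E ⧸ S) = 0 := by
      simp [Submodule.Quotient.mk_eq_zero, S, Submodule.mem_span_singleton_self]
    simp [ContinuousLinearMap.comp_apply, Submodule.mkQ_apply, this]
  · simpa [ContinuousLinearMap.comp_apply, Submodule.mkQ_apply] using hg

/-- Baire category step: in a Banach space, countably many functionals each of which is
somewhere nonzero admit a common point where all are nonzero. -/
lemma aux_baire {X : Type*} [NormedAddCommGroup X] [NormedSpace ℂ X] [CompleteSpace X]
    (g : ℕ → X →L[ℂ] ℂ) (h : ∀ n, ∃ y : X, g n y ≠ 0) :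
    ∃ y : X, ∀ n, g n y ≠ 0 := by
  haveI : Filter.NeBot (nhdsWithin (0 : ℂ) { x : ℂ | IsUnit x }) :=
    NormedField.nhdsWithin_isUnit_neBot
  have hdense : ∀ n, Dense ((LinearMap.ker (g n : X →ₗ[ℂ] ℂ) : Set X)ᶜ) := by
    intro n
    rw [← interior_eq_empty_iff_dense_compl]
    by_contra hI
    have htop : LinearMap.ker (g n : X →ₗ[ℂ] ℂ) = ⊤ :=
      (LinearMap.ker (g n : X →ₗ[ℂ] ℂ)).eq_top_of_nonempty_interior'
        (Set.nonempty_iff_ne_empty.2 hI)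
    obtain ⟨y, hy⟩ := h n
    have hmem : y ∈ LinearMap.ker (g n : X →ₗ[ℂ] ℂ) := htop.symm ▸ Submodule.mem_top
    exact hy (LinearMap.mem_ker.1 hmem)
  have hopen : ∀ n, IsOpen ((LinearMap.ker (g n : X →ₗ[ℂ] ℂ) : Set X)ᶜ) :=
    fun n => (ContinuousLinearMap.isClosed_ker (g n)).isOpen_compl
  obtain ⟨y, hy⟩ := (dense_iInter_of_isOpen hopen hdense).nonempty
  refine ⟨y, fun n => ?_⟩
  have := (Set.mem_iInter.1 hy) n
  simpa [LinearMap.mem_ker] using this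


/-- Baire in a hyperplane: countably many functionals, each nonzero somewhere on `ker φ`,
have a common non-vanishing point in `ker φ`. -/
lemma aux_baire_ker {X : Type*} [NormedAddCommGroup X] [NormedSpace ℂ X] [CompleteSpace X]
    (φ : X →L[ℂ] ℂ) (g : ℕ → X →L[ℂ] ℂ)
    (h : ∀ n, ∃ y : X, φ y = 0 ∧ g n y ≠ 0) :
    ∃ y : X, φ y = 0 ∧ ∀ n, g n y ≠ 0 := by
  haveI : CompleteSpace (LinearMap.ker (φ : X →ₗ[ℂ] ℂ)) :=
    (ContinuousLinearMap.isClosed_ker φ).completeSpace_coe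
  have hprop : ∀ n, ∃ z : LinearMap.ker (φ : X →ₗ[ℂ] ℂ),
      ((g n).comp (LinearMap.ker (φ : X →ₗ[ℂ] ℂ)).subtypeL) z ≠ 0 := by
    intro n
    obtain ⟨y, hy0, hyn⟩ := h n
    exact ⟨⟨y, LinearMap.mem_ker.2 hy0⟩, by simpa using hyn⟩
  obtain ⟨z, hz⟩ := aux_baire (fun n => (g n).comp (LinearMap.ker (φ : X →ₗ[ℂ] ℂ)).subtypeL) hprop
  refine ⟨(z : X), LinearMap.mem_ker.1 z.2, fun n => ?_⟩
  simpa using hz n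

set_option maxHeartbeats 1000000 in
set_option synthInstance.maxHeartbeats 400000 in
/-- Let `E` be a complex Banach space, `u ∈ E` and `(xₙ)` a countable family of vectors
of `E` none of which lies on the line `ℂ·u`.  Then there is a continuous linear
functional `f : E → ℂ` with `f(u) = 0` and `f(xₙ) ≠ 0` for every `n`. -/
theorem exists_continuous_functional_vanishing_at_avoiding_countably_many
    {E : Type*} [NormedAddCommGroup E] [NormedSpace ℂ E] [CompleteSpace E]
    (u : E) (x : ℕ → E) (hx : ∀ n, x n ∉ Submodule.span ℂ ({u} : Set E)) :
    ∃ f : E →L[ℂ] ℂ, f u = 0 ∧ ∀ n, f (x n) ≠ 0 := by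
  have key : ∀ n, ∃ f : E →L[ℂ] ℂ,
      (ContinuousLinearMap.apply ℂ ℂ u) f = 0 ∧
      (ContinuousLinearMap.apply ℂ ℂ (x n)) f ≠ 0 := by
    intro n
    obtain ⟨f, hfu, hfx⟩ := aux_exists_functional (hx n)
    exact ⟨f, by simpa using hfu, by simpa using hfx⟩
  obtain ⟨f, hf0, hfn⟩ := aux_baire_ker (ContinuousLinearMap.apply ℂ ℂ u)
    (fun n => ContinuousLinearMap.apply ℂ ℂ (x n)) key
  exact ⟨f, by simpa using hf0, fun n => by simpa using hfn n⟩
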